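/- Let a ∈ (0,1) and α ∈ (0,π), set c := 2·cot²α/(1−a) − 1, and suppose −1 < c < 0. Define r := (√(2(1−a)) / sin α) · [√(1+c) + arcsin(√(−c))/√(−c)]^{-1}. Then r satisfies the non-steerability boundary equation for displaced T-states with degenerate correlation eigenvalues t₁' = t₂' = r sin α/√2, t₃' = r cos α: (1/2π) ∫_{S²} √( r² sin²α (x₁² + x₂²) / (2(1−a)) + r² cos²α · x₃² / (1−a)² ) dσ(x) = 1. -/

import Mathlib

open MeasureTheory

noncomputable section

/-- The unit sphere `S²` in `ℝ³`. -/
abbrev S2 : Set (EuclideanSpace ℝ (Fin 3)) := Metric.sphere (0 : EuclideanSpace ℝ (Fin 3)) 1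

/-- The surface measure `σ` on the unit sphere `S² ⊂ ℝ³`; it is the 2-dimensional
(Hausdorff) surface measure, with total mass `4π`. -/
def sphereMeasure : Measure (Metric.sphere (0 : EuclideanSpace ℝ (Fin 3)) 1) :=
  (volume : Measure (EuclideanSpace ℝ (Fin 3))).toSphere

namespace DisplacedTAux

open MeasureTheory Metric Set Real intervalIntegral

local notation "E3" => EuclideanSpace ℝ (Fin 3)

/-- The integrand extended to all of `ℝ³`. -/
def F (A B : ℝ) (x : EuclideanSpace ℝ (Fin 3)) : ℝ :=
  Real.sqrt (A * (x 0 ^ 2 + x 1 ^ 2) + B * x 2 ^ 2)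

lemma F_cont (A B : ℝ) : Continuous (F A B) := by
  unfold F
  fun_prop

lemma F_homog (A B : ℝ) {t : ℝ} (ht : 0 ≤ t) (x : EuclideanSpace ℝ (Fin 3)) :
    F A B (t • x) = t * F A B x := by
  unfold F
  have h : ∀ i : Fin 3, (t • x) i = t * x i := fun i => rfl
  rw [h 0, h 1, h 2]
  rw [show A * ((t * x 0) ^ 2 + (t * x 1) ^ 2) + B * (t * x 2) ^ 2
      = t ^ 2 * (A * (x 0 ^ 2 + x 1 ^ 2) + B * x 2 ^ 2) by ring,
    Real.sqrt_mul (sq_nonneg t), Real.sqrt_sq ht]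

lemma sphere_eq_four_ball (A B : ℝ) :
    ∫ u : Metric.sphere (0 : E3) 1, F A B u ∂((volume : Measure E3).toSphere)
      = 4 * ∫ x in ball (0 : E3) 1, F A B x := by
  set μ : Measure E3 := volume
  set w : ℝ → ℝ := (Set.Iio (1 : ℝ)).indicator (fun t => t) with hw
  have key : ∫ x : ({0}ᶜ : Set E3), (F A B ((homeomorphUnitSphereProd E3 x).1 : E3)
        * w ((homeomorphUnitSphereProd E3 x).2 : ℝ)) ∂(μ.comap Subtype.val)
      = ∫ p : Metric.sphere (0 : E3) 1 × Set.Ioi (0 : ℝ),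
          F A B (p.1 : E3) * w (p.2 : ℝ)
        ∂(μ.toSphere.prod (Measure.volumeIoiPow (Module.finrank ℝ E3 - 1))) :=
    μ.measurePreserving_homeomorphUnitSphereProd.integral_comp
      (Homeomorph.measurableEmbedding _)
      (fun p : Metric.sphere (0 : E3) 1 × Set.Ioi (0 : ℝ) => F A B (p.1 : E3) * w (p.2 : ℝ))
  have hball : ∫ x in ball (0 : E3) 1, F A B x
      = ∫ x : ({0}ᶜ : Set E3), (F A B ((homeomorphUnitSphereProd E3 x).1 : E3)
          * w ((homeomorphUnitSphereProd E3 x).2 : ℝ)) ∂(μ.comap Subtype.val) := by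
    rw [← MeasureTheory.integral_indicator measurableSet_ball]
    rw [show ∫ x, (ball (0:E3) 1).indicator (F A B) x ∂μ
        = ∫ x in ({0}ᶜ : Set E3), (ball (0:E3) 1).indicator (F A B) x ∂μ by
      rw [restrict_compl_singleton]]
    rw [← integral_subtype_comap (measurableSet_singleton (0:E3)).compl]
    refine integral_congr_ae (Filter.Eventually.of_forall fun x => ?_)
    have hx0 : (x : E3) ≠ 0 := x.2
    have hnorm : ‖(x : E3)‖ ≠ 0 := norm_ne_zero_iff.2 hx0
    simp only [homeomorphUnitSphereProd_apply_fst_coe, homeomorphUnitSphereProd_apply_snd_coe]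
    rw [F_homog A B (by positivity : (0:ℝ) ≤ ‖(x : E3)‖⁻¹)]
    by_cases hlt : ‖(x : E3)‖ < 1
    · rw [hw]
      rw [Set.indicator_of_mem (by exact hlt : ‖(x : E3)‖ ∈ Set.Iio 1) (fun t => t),
        Set.indicator_of_mem (by simpa [mem_ball_zero_iff] using hlt)]
      field_simp
    · rw [hw, Set.indicator_of_notMem (by simpa using hlt),
        Set.indicator_of_notMem (by simpa [mem_ball_zero_iff] using hlt)]
      ring
  have hdim : Module.finrank ℝ E3 - 1 = 2 := by
    rw [finrank_euclideanSpace_fin]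
  have hw_int : ∫ t : Set.Ioi (0:ℝ), w (t : ℝ) ∂(Measure.volumeIoiPow 2) = 4⁻¹ := by
    rw [Measure.volumeIoiPow]
    simp only [ENNReal.ofReal]
    rw [integral_withDensity_eq_integral_smul
      ((measurable_subtype_coe.pow_const _).real_toNNReal),
      integral_subtype_comap measurableSet_Ioi (fun a => Real.toNNReal (a ^ 2) • w a)]
    rw [setIntegral_congr_fun (g := fun a => (Set.Iio (1:ℝ)).indicator (fun t => t ^ 3) a)
      measurableSet_Ioi ?_]
    · rw [setIntegral_indicator measurableSet_Iio, Set.Ioi_inter_Iio,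
        Measure.restrict_congr_set Ioo_ae_eq_Ioc, ← intervalIntegral.integral_of_le zero_le_one]
      simp [integral_pow]
      norm_num
    · intro a ha
      have ha0 : (0:ℝ) ≤ a := le_of_lt ha
      show Real.toNNReal (a ^ 2) • w a = (Set.Iio (1:ℝ)).indicator (fun t => t ^ 3) a
      rw [NNReal.smul_def, Real.coe_toNNReal _ (by positivity), hw]
      by_cases h : a < 1
      · rw [Set.indicator_of_mem (by exact h), Set.indicator_of_mem (by exact h)]
        simp [smul_eq_mul]; ring
      · rw [Set.indicator_of_notMem (by simpa using h),
          Set.indicator_of_notMem (by simpa using h)]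
        simp
  rw [hball, key, hdim, integral_prod_mul (fun u : Metric.sphere (0:E3) 1 => F A B (u : E3))
    (fun t : Set.Ioi (0:ℝ) => w (t : ℝ)), hw_int]
  ring

def g2 (A B z : ℝ) (p : ℝ × ℝ) : ℝ :=
  if z ^ 2 + (p.1 ^ 2 + p.2 ^ 2) < 1 then Real.sqrt (A * (p.1 ^ 2 + p.2 ^ 2) + B * z ^ 2) else 0

lemma ball_to_fubini (A B : ℝ) :
    ∫ x in ball (0 : E3) 1, F A B x = ∫ z : ℝ, ∫ p : ℝ × ℝ, g2 A B z p := by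
  classical
  set ψ : EuclideanSpace ℝ (Fin 3) ≃ᵐ ℝ × (ℝ × ℝ) :=
    (MeasurableEquiv.toLp 2 (Fin 3 → ℝ)).symm.trans
      ((MeasurableEquiv.piFinSuccAbove (fun _ : Fin 3 => ℝ) 2).trans
        ((MeasurableEquiv.refl ℝ).prodCongr MeasurableEquiv.finTwoArrow)) with hψdef
  have hψ : MeasurePreserving ψ volume volume := by
    have h1 := EuclideanSpace.volume_preserving_symm_measurableEquiv_toLp (Fin 3)
    have h2 := volume_preserving_piFinSuccAbove (fun _ : Fin 3 => ℝ) 2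
    have h3 : MeasurePreserving
        ((MeasurableEquiv.refl ℝ).prodCongr
          (MeasurableEquiv.finTwoArrow : (Fin 2 → ℝ) ≃ᵐ ℝ × ℝ)) volume volume :=
      (MeasurePreserving.id volume).prod (volume_preserving_finTwoArrow ℝ)
    exact h3.comp (h2.comp h1)
  have hpt : ∀ x : EuclideanSpace ℝ (Fin 3),
      (ball (0:E3) 1).indicator (F A B) x = g2 A B (ψ x).1 (ψ x).2 := by
    intro x
    have h1 : (ψ x).1 = x 2 := rfl
    have h21 : (ψ x).2.1 = x 0 := rfl
    have h22 : (ψ x).2.2 = x 1 := rfl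
    have hb : (x ∈ ball (0:E3) 1) ↔ x 2 ^ 2 + (x 0 ^ 2 + x 1 ^ 2) < 1 := by
      rw [mem_ball_zero_iff, EuclideanSpace.norm_eq, show (1:ℝ) = Real.sqrt 1 by simp]
      rw [Real.sqrt_lt_sqrt_iff (by positivity)]
      simp [Fin.sum_univ_three, Real.norm_eq_abs, sq_abs]
      constructor <;> intro h <;> linarith
    by_cases hx : x ∈ ball (0:E3) 1
    · rw [Set.indicator_of_mem hx, g2, h1, h21, h22, if_pos (hb.1 hx)]
      rfl
    · rw [Set.indicator_of_notMem hx, g2, h1, h21, h22, if_neg (fun hcon => hx (hb.2 hcon))]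
  have hint : Integrable (fun q : ℝ × (ℝ × ℝ) => g2 A B q.1 q.2) volume := by
    rw [← hψ.integrable_comp_emb ψ.measurableEmbedding]
    have : (fun q : ℝ × (ℝ × ℝ) => g2 A B q.1 q.2) ∘ ψ
        = (ball (0:E3) 1).indicator (F A B) := by
      funext x; exact (hpt x).symm
    rw [this, integrable_indicator_iff measurableSet_ball]
    exact (((F_cont A B).continuousOn).integrableOn_compact
      (isCompact_closedBall _ _)).mono_set ball_subset_closedBall
  have key := hψ.integral_comp ψ.measurableEmbedding (fun q : ℝ × (ℝ × ℝ) => g2 A B q.1 q.2)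
  rw [← MeasureTheory.integral_indicator measurableSet_ball]
  calc ∫ x, (ball (0:E3) 1).indicator (F A B) x
      = ∫ x, g2 A B (ψ x).1 (ψ x).2 := by
        exact integral_congr_ae (Filter.Eventually.of_forall hpt)
    _ = ∫ q : ℝ × (ℝ × ℝ), g2 A B q.1 q.2 := key
    _ = ∫ z : ℝ, ∫ p : ℝ × ℝ, g2 A B z p := by
        rw [show (volume : Measure (ℝ × (ℝ × ℝ))) = Measure.prod volume volume from rfl]
        exact integral_prod _ hint

lemma radial (A B z : ℝ) (hA : 0 < A) (hB : 0 < B) (hz : z ≠ 0) (h2 : 0 < 1 - z ^ 2) :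
    ∫ ρ in Ioi (0:ℝ), (if ρ ^ 2 < 1 - z ^ 2 then ρ * Real.sqrt (A * ρ ^ 2 + B * z ^ 2) else 0)
      = (Real.sqrt (A + (B - A) * z ^ 2) ^ 3 - Real.sqrt B ^ 3 * |z| ^ 3) / (3 * A) := by
  set R : ℝ := Real.sqrt (1 - z ^ 2) with hR
  have hR0 : 0 < R := Real.sqrt_pos.2 h2
  have hRsq : R ^ 2 = 1 - z ^ 2 := Real.sq_sqrt h2.le
  have hz2 : 0 < z ^ 2 := by positivity
  have congr1 : ∀ ρ ∈ Ioi (0:ℝ),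
      (if ρ ^ 2 < 1 - z ^ 2 then ρ * Real.sqrt (A * ρ ^ 2 + B * z ^ 2) else 0)
        = (Iio R).indicator (fun ρ => ρ * Real.sqrt (A * ρ ^ 2 + B * z ^ 2)) ρ := by
    intro ρ hρ
    have hρ0 : (0:ℝ) < ρ := hρ
    have hiff : ρ ^ 2 < 1 - z ^ 2 ↔ ρ < R := by
      rw [← hRsq]
      constructor <;> intro h <;> nlinarith
    by_cases h : ρ < R
    · rw [if_pos (hiff.2 h), Set.indicator_of_mem (by exact h)]
    · rw [if_neg (fun hcon => h (hiff.1 hcon)), Set.indicator_of_notMem (by simpa using h)]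
  rw [setIntegral_congr_fun measurableSet_Ioi congr1,
    setIntegral_indicator measurableSet_Iio, Set.Ioi_inter_Iio,
    Measure.restrict_congr_set Ioo_ae_eq_Ioc, ← intervalIntegral.integral_of_le hR0.le]
  have hderiv : ∀ ρ ∈ Set.uIcc (0:ℝ) R,
      HasDerivAt (fun ρ => Real.sqrt (A * ρ ^ 2 + B * z ^ 2) ^ 3 / (3 * A))
        (ρ * Real.sqrt (A * ρ ^ 2 + B * z ^ 2)) ρ := by
    intro ρ _
    have hupos : 0 < A * ρ ^ 2 + B * z ^ 2 := by positivity
    have hu : HasDerivAt (fun ρ : ℝ => A * ρ ^ 2 + B * z ^ 2) (A * (2 * ρ)) ρ := by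
      simpa using ((hasDerivAt_pow 2 ρ).const_mul A).add_const (B * z ^ 2)
    have hsq : HasDerivAt (fun ρ : ℝ => Real.sqrt (A * ρ ^ 2 + B * z ^ 2))
        (1 / (2 * Real.sqrt (A * ρ ^ 2 + B * z ^ 2)) * (A * (2 * ρ))) ρ :=
      (Real.hasDerivAt_sqrt (ne_of_gt hupos)).comp ρ hu
    have hcube := (hsq.pow 3).div_const (3 * A)
    refine hcube.congr_deriv ?_
    symm
    have hspos : 0 < Real.sqrt (A * ρ ^ 2 + B * z ^ 2) := Real.sqrt_pos.2 hupos
    have hss : Real.sqrt (A * ρ ^ 2 + B * z ^ 2) ^ 2 = A * ρ ^ 2 + B * z ^ 2 :=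
      Real.sq_sqrt hupos.le
    field_simp
    ring
  rw [intervalIntegral.integral_eq_sub_of_hasDerivAt hderiv
    (Continuous.intervalIntegrable (by fun_prop) _ _)]
  have e1 : A * R ^ 2 + B * z ^ 2 = A + (B - A) * z ^ 2 := by rw [hRsq]; ring
  have e2 : Real.sqrt (A * 0 ^ 2 + B * z ^ 2) = Real.sqrt B * |z| := by
    rw [show A * 0 ^ 2 + B * z ^ 2 = B * z ^ 2 by ring, Real.sqrt_mul hB.le,
      Real.sqrt_sq_eq_abs]
  rw [e1, e2]
  rw [mul_pow]
  ring

lemma inner_polar (A B : ℝ) (hA : 0 < A) (hB : 0 < B) (z : ℝ) (hz : z ≠ 0) :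
    ∫ p : ℝ × ℝ, g2 A B z p
      = (Ioo (-1:ℝ) 1).indicator
          (fun z => (2 * Real.pi / (3 * A)) *
            (Real.sqrt (A + (B - A) * z ^ 2) ^ 3 - Real.sqrt B ^ 3 * |z| ^ 3)) z := by
  rw [← integral_comp_polarCoord_symm (g2 A B z)]
  have hcongr : ∀ q ∈ polarCoord.target,
      q.1 • g2 A B z (polarCoord.symm q)
        = (fun ρ => if ρ ^ 2 < 1 - z ^ 2 then ρ * Real.sqrt (A * ρ ^ 2 + B * z ^ 2) else 0) q.1
          * (fun _ : ℝ => (1:ℝ)) q.2 := by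
    rintro ⟨ρ, θ⟩ hq
    rw [polarCoord_target] at hq
    obtain ⟨hρ, -⟩ := hq
    have hρ0 : (0:ℝ) < ρ := hρ
    have hsymm : (polarCoord.symm (ρ, θ)).1 ^ 2 + (polarCoord.symm (ρ, θ)).2 ^ 2 = ρ ^ 2 := by
      rw [polarCoord_symm_apply]
      simp only
      nlinarith [Real.sin_sq_add_cos_sq θ]
    simp only [g2, hsymm, smul_eq_mul, mul_one]
    by_cases h : ρ ^ 2 < 1 - z ^ 2
    · rw [if_pos (by linarith), if_pos h]
    · rw [if_neg (by intro hcon; exact h (by linarith)), if_neg h, mul_zero]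
  rw [setIntegral_congr_fun (polarCoord.open_target.measurableSet) hcongr, polarCoord_target]
  rw [show (volume : Measure (ℝ × ℝ)) = Measure.prod volume volume from rfl,
    ← Measure.prod_restrict,
    integral_prod_mul (fun ρ : ℝ => if ρ ^ 2 < 1 - z ^ 2
      then ρ * Real.sqrt (A * ρ ^ 2 + B * z ^ 2) else 0) (fun _ : ℝ => (1:ℝ))]
  rw [setIntegral_const, Real.volume_real_Ioo_of_le (by linarith [Real.pi_pos] : -Real.pi ≤ Real.pi),
    smul_eq_mul]
  by_cases hl : 0 < 1 - z ^ 2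
  · rw [radial A B z hA hB hz hl]
    have hzmem : z ∈ Ioo (-1:ℝ) 1 := by
      constructor <;> nlinarith
    rw [Set.indicator_of_mem hzmem]
    ring
  · have : ∀ ρ ∈ Ioi (0:ℝ),
        (if ρ ^ 2 < 1 - z ^ 2 then ρ * Real.sqrt (A * ρ ^ 2 + B * z ^ 2) else 0) = 0 := by
      intro ρ hρ
      have hρ0 : (0:ℝ) < ρ := hρ
      rw [if_neg (by nlinarith)]
    rw [setIntegral_congr_fun measurableSet_Ioi this, integral_zero,
      Set.indicator_of_notMem (by simp only [Set.mem_Ioo]; intro hcon; nlinarith [hcon.1, hcon.2])]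
    ring

lemma abs_cube : ∫ z in (-1:ℝ)..1, |z| ^ 3 = 1 / 2 := by
  have h1 : ∫ z in (0:ℝ)..1, |z| ^ 3 = 1 / 4 := by
    rw [intervalIntegral.integral_congr (g := fun z => z ^ 3) ?_]
    · simp [integral_pow]; norm_num
    · intro z hz
      rw [Set.uIcc_of_le (by norm_num : (0:ℝ) ≤ 1)] at hz
      simp only
      rw [abs_of_nonneg hz.1]
  have h2 : ∫ z in (-1:ℝ)..0, |z| ^ 3 = 1 / 4 := by
    rw [intervalIntegral.integral_congr (g := fun z => -(z ^ 3)) ?_]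
    · rw [intervalIntegral.integral_neg]
      simp [integral_pow]
      norm_num
    · intro z hz
      rw [Set.uIcc_of_le (by norm_num : (-1:ℝ) ≤ 0)] at hz
      simp only
      rw [abs_of_nonpos hz.2]
      ring
  have := intervalIntegral.integral_add_adjacent_intervals
    (μ := volume) (a := (-1:ℝ)) (b := 0) (c := 1)
    (f := fun z => |z| ^ 3)
    (Continuous.intervalIntegrable (by fun_prop) _ _)
    (Continuous.intervalIntegrable (by fun_prop) _ _)
  rw [h1, h2] at this
  linarith [this]

lemma sqrt_cube_integral (A B : ℝ) (hA : 0 < A) (hB : 0 < B) (hBA : B < A) :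
    ∫ z in (-1:ℝ)..1, Real.sqrt (A + (B - A) * z ^ 2) ^ 3
      = Real.sqrt B ^ 3 / 2
        + 3 * A / 4 * (Real.sqrt B
          + A / Real.sqrt (A - B) * Real.arcsin (Real.sqrt (A - B) / Real.sqrt A)) := by
  set D : ℝ := A - B with hD
  have hD0 : 0 < D := by simp [hD]; linarith
  set k : ℝ := Real.sqrt D / Real.sqrt A with hk
  have hsA : Real.sqrt A ^ 2 = A := Real.sq_sqrt hA.le
  have hsD : Real.sqrt D ^ 2 = D := Real.sq_sqrt hD0.le
  have hsA0 : 0 < Real.sqrt A := Real.sqrt_pos.2 hA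
  have hsD0 : 0 < Real.sqrt D := Real.sqrt_pos.2 hD0
  have hk0 : 0 < k := by positivity
  have hk1 : k < 1 := by
    rw [hk, div_lt_one hsA0]
    exact Real.sqrt_lt_sqrt hD0.le (by linarith)
  set G : ℝ → ℝ := fun z => z * Real.sqrt (A + (B - A) * z ^ 2) ^ 3 / 4
    + 3 * A / 8 * (z * Real.sqrt (A + (B - A) * z ^ 2)
      + A / Real.sqrt D * Real.arcsin (k * z)) with hG
  have hderiv : ∀ z ∈ Set.uIcc (-1:ℝ) 1,
      HasDerivAt G (Real.sqrt (A + (B - A) * z ^ 2) ^ 3) z := by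

    intro z hz
    rw [Set.uIcc_of_le (by norm_num : (-1:ℝ) ≤ 1)] at hz
    have hz2 : z ^ 2 ≤ 1 := by nlinarith [hz.1, hz.2]
    have hu0 : 0 < A + (B - A) * z ^ 2 := by nlinarith
    set u : ℝ := A + (B - A) * z ^ 2 with hu
    have hsu : Real.sqrt u ^ 2 = u := Real.sq_sqrt hu0.le
    have hsu0 : 0 < Real.sqrt u := Real.sqrt_pos.2 hu0
    have hkz2 : (k * z) ^ 2 < 1 := by
      rw [mul_pow, hk, div_pow, hsA, hsD]
      rw [div_mul_eq_mul_div, div_lt_one hA]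
      nlinarith
    have hkzne1 : k * z ≠ 1 := by
      intro h; rw [h] at hkz2; norm_num at hkz2
    have hkznem1 : k * z ≠ -1 := by
      intro h; rw [h] at hkz2; norm_num at hkz2
    have hu' : HasDerivAt (fun z : ℝ => A + (B - A) * z ^ 2) ((B - A) * (2 * z)) z := by
      simpa using ((hasDerivAt_pow 2 z).const_mul (B - A)).const_add A
    have hsqrtu : HasDerivAt (fun z : ℝ => Real.sqrt (A + (B - A) * z ^ 2))
        (1 / (2 * Real.sqrt u) * ((B - A) * (2 * z))) z :=
      (Real.hasDerivAt_sqrt (ne_of_gt hu0)).comp z hu'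
    have hcube := hsqrtu.pow 3
    have hterm1 := ((hasDerivAt_id z).mul hcube).div_const 4
    have hterm2a := (hasDerivAt_id z).mul hsqrtu
    have hlin : HasDerivAt (fun z : ℝ => k * z) k z := by
      simpa using (hasDerivAt_id z).const_mul k
    have harc : HasDerivAt (fun z : ℝ => Real.arcsin (k * z))
        (1 / Real.sqrt (1 - (k * z) ^ 2) * k) z :=
      (Real.hasDerivAt_arcsin hkznem1 hkzne1).comp z hlin
    have hfull := hterm1.add
      (((hterm2a.add (harc.const_mul (A / Real.sqrt D))).const_mul (3 * A / 8)))
    refine hfull.congr_deriv ?_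
    symm
    have hone : 1 - (k * z) ^ 2 = u / A := by
      have hkz : (k * z) ^ 2 = D * z ^ 2 / A := by
        rw [mul_pow, hk, div_pow, hsA, hsD]; ring
      rw [hkz, hu, hD]
      field_simp
      ring
    rw [hone, Real.sqrt_div hu0.le, hk, ← hu]
    simp only [id_eq, Nat.cast_ofNat, Pi.pow_apply, ← hu]
    have harcterm : A / Real.sqrt D * (1 / (Real.sqrt u / Real.sqrt A)
        * (Real.sqrt D / Real.sqrt A)) = A / Real.sqrt u := by
      field_simp
    rw [harcterm]
    clear_value u
    have hsune : Real.sqrt u ≠ 0 := ne_of_gt hsu0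
    field_simp
    ring_nf
    have e4 : Real.sqrt u ^ 4 = u ^ 2 := by rw [show 4 = 2*2 from rfl, pow_mul, hsu]
    have e6 : Real.sqrt u ^ 6 = u ^ 3 := by rw [show 6 = 2*3 from rfl, pow_mul, hsu]
    rw [hsu]
    linear_combination (24 * u + 12 * A) * hu + 24 * e4
  rw [intervalIntegral.integral_eq_sub_of_hasDerivAt hderiv
    (Continuous.intervalIntegrable (by fun_prop) _ _)]
  rw [hG]
  simp only
  rw [show A + (B - A) * (1:ℝ) ^ 2 = B by ring, show A + (B - A) * (-1:ℝ) ^ 2 = B by ring,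
    mul_one, show k * (-1) = -k by ring, Real.arcsin_neg, hk, hD]
  ring

lemma outer_integral (A B : ℝ) (hA : 0 < A) (hB : 0 < B) (hBA : B < A) :
    ∫ z : ℝ, (Ioo (-1:ℝ) 1).indicator
        (fun z => (2 * Real.pi / (3 * A)) *
          (Real.sqrt (A + (B - A) * z ^ 2) ^ 3 - Real.sqrt B ^ 3 * |z| ^ 3)) z
      = Real.pi / 2 * (Real.sqrt B
          + A / Real.sqrt (A - B) * Real.arcsin (Real.sqrt (A - B) / Real.sqrt A)) := by
  rw [MeasureTheory.integral_indicator measurableSet_Ioo,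
    Measure.restrict_congr_set Ioo_ae_eq_Ioc,
    ← intervalIntegral.integral_of_le (by norm_num : (-1:ℝ) ≤ 1),
    intervalIntegral.integral_const_mul,
    intervalIntegral.integral_sub (Continuous.intervalIntegrable (by fun_prop) _ _)
      (Continuous.intervalIntegrable (by fun_prop) _ _),
    intervalIntegral.integral_const_mul, sqrt_cube_integral A B hA hB hBA, abs_cube]
  field_simp
  ring

lemma sphere_value (A B : ℝ) (hA : 0 < A) (hB : 0 < B) (hBA : B < A) :
    ∫ u : Metric.sphere (0 : E3) 1, F A B u ∂((volume : Measure E3).toSphere)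
      = 2 * Real.pi * (Real.sqrt B
          + A / Real.sqrt (A - B) * Real.arcsin (Real.sqrt (A - B) / Real.sqrt A)) := by
  rw [sphere_eq_four_ball, ball_to_fubini]
  have h0 : ∀ᵐ z : ℝ ∂volume, z ≠ 0 := by
    refine compl_mem_ae_iff.2 ?_
    exact measure_mono_null (fun x hx => Set.mem_singleton_iff.mpr hx) (measure_singleton (0:ℝ))
  have hcongr : (fun z : ℝ => ∫ p : ℝ × ℝ, g2 A B z p)
      =ᵐ[volume] (fun z : ℝ => (Ioo (-1:ℝ) 1).indicator
        (fun z => (2 * Real.pi / (3 * A)) *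
          (Real.sqrt (A + (B - A) * z ^ 2) ^ 3 - Real.sqrt B ^ 3 * |z| ^ 3)) z) := by
    filter_upwards [h0] with z hz
    exact inner_polar A B hA hB z hz
  rw [integral_congr_ae hcongr, outer_integral A B hA hB hBA]
  ring

end DisplacedTAux


set_option maxHeartbeats 1000000 in
/-- Displaced T-state boundary, case `−1 < c < 0`: with `c = 2cot²α/(1−a) − 1` and
`r = (√(2(1−a))/sin α)·[√(1+c) + arcsin(√(−c))/√(−c)]⁻¹`,
`r` satisfies the non-steerability boundary equation
`(1/2π) ∫_{S²} √(r² sin²α (x₁²+x₂²)/(2(1−a)) + r² cos²α x₃²/(1−a)²) dσ = 1`. -/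
theorem displaced_T_boundary_neg (a α c r : ℝ)
    (ha0 : 0 < a) (ha1 : a < 1) (hα0 : 0 < α) (hα1 : α < Real.pi)
    (hc : c = 2 * Real.cot α ^ 2 / (1 - a) - 1) (hc0 : -1 < c) (hc1 : c < 0)
    (hr : r = Real.sqrt (2 * (1 - a)) / Real.sin α *
      (Real.sqrt (1 + c) + Real.arcsin (Real.sqrt (-c)) / Real.sqrt (-c))⁻¹) :
    (2 * Real.pi)⁻¹ *
      (∫ x : Metric.sphere (0 : EuclideanSpace ℝ (Fin 3)) 1,
        Real.sqrt (r ^ 2 * Real.sin α ^ 2 *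
            ((x : EuclideanSpace ℝ (Fin 3)) 0 ^ 2 +
              (x : EuclideanSpace ℝ (Fin 3)) 1 ^ 2) / (2 * (1 - a)) +
          r ^ 2 * Real.cos α ^ 2 *
            (x : EuclideanSpace ℝ (Fin 3)) 2 ^ 2 / (1 - a) ^ 2) ∂sphereMeasure) = 1 := by
  have h1a : 0 < 1 - a := by linarith
  have hsin : 0 < Real.sin α := Real.sin_pos_of_pos_of_lt_pi hα0 hα1
  have hcos : Real.cos α ≠ 0 := by
    intro h
    rw [Real.cot_eq_cos_div_sin, h] at hc
    norm_num at hc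
    linarith
  set K : ℝ := Real.sqrt (1 + c) + Real.arcsin (Real.sqrt (-c)) / Real.sqrt (-c) with hK
  have hc0' : 0 < 1 + c := by linarith
  have hcneg : 0 < -c := by linarith
  have hsnc : 0 < Real.sqrt (-c) := Real.sqrt_pos.2 hcneg
  have hKpos : 0 < K := by
    have h1 : 0 < Real.arcsin (Real.sqrt (-c)) := Real.arcsin_pos.2 hsnc
    have h2 : 0 ≤ Real.sqrt (1 + c) := Real.sqrt_nonneg _
    have := div_pos h1 hsnc
    rw [hK]
    linarith
  have hr0 : 0 < r := by
    rw [hr]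
    exact mul_pos (div_pos (Real.sqrt_pos.2 (by linarith)) hsin) (inv_pos.2 hKpos)
  set A : ℝ := r ^ 2 * Real.sin α ^ 2 / (2 * (1 - a)) with hA
  set B : ℝ := r ^ 2 * Real.cos α ^ 2 / (1 - a) ^ 2 with hB
  have hApos : 0 < A := by rw [hA]; positivity
  have hBpos : 0 < B := by rw [hB]; positivity
  have hBA : B = A * (1 + c) := by
    rw [hA, hB, hc, Real.cot_eq_cos_div_sin]
    field_simp
    ring
  have hBltA : B < A := by nlinarith [hApos]
  rw [show sphereMeasure = (volume : Measure (EuclideanSpace ℝ (Fin 3))).toSphere from rfl]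
  have hint_eq : ∫ x : Metric.sphere (0 : EuclideanSpace ℝ (Fin 3)) 1,
        Real.sqrt (r ^ 2 * Real.sin α ^ 2 *
            ((x : EuclideanSpace ℝ (Fin 3)) 0 ^ 2 +
              (x : EuclideanSpace ℝ (Fin 3)) 1 ^ 2) / (2 * (1 - a)) +
          r ^ 2 * Real.cos α ^ 2 *
            (x : EuclideanSpace ℝ (Fin 3)) 2 ^ 2 / (1 - a) ^ 2)
          ∂((volume : Measure (EuclideanSpace ℝ (Fin 3))).toSphere)
      = ∫ u : Metric.sphere (0 : EuclideanSpace ℝ (Fin 3)) 1, DisplacedTAux.F A B u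
          ∂((volume : Measure (EuclideanSpace ℝ (Fin 3))).toSphere) := by
    refine integral_congr_ae (Filter.Eventually.of_forall fun x => ?_)
    unfold DisplacedTAux.F
    rw [hA, hB]
    norm_num
    congr 1
    ring
  rw [hint_eq, DisplacedTAux.sphere_value A B hApos hBpos hBltA]
  have hsA0 : 0 < Real.sqrt A := Real.sqrt_pos.2 hApos
  have hsB : Real.sqrt B = Real.sqrt A * Real.sqrt (1 + c) := by
    rw [hBA, Real.sqrt_mul hApos.le]
  have hAB : A - B = A * (-c) := by rw [hBA]; ring
  have hsAB : Real.sqrt (A - B) = Real.sqrt A * Real.sqrt (-c) := by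
    rw [hAB, Real.sqrt_mul hApos.le]
  have harg : Real.sqrt (A - B) / Real.sqrt A = Real.sqrt (-c) := by
    rw [hsAB, mul_comm, mul_div_assoc, div_self hsA0.ne', mul_one]
  have hcoef : A / Real.sqrt (A - B) = Real.sqrt A / Real.sqrt (-c) := by
    rw [hsAB, div_mul_eq_div_div, Real.div_sqrt]
  rw [hsB, harg, hcoef]
  have h2a : Real.sqrt (2 * (1 - a)) ^ 2 = 2 * (1 - a) := Real.sq_sqrt (by linarith)
  have hr2 : r ^ 2 = 2 * (1 - a) * (K⁻¹) ^ 2 / Real.sin α ^ 2 := by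
    rw [hr, mul_pow, div_pow, h2a]
    ring
  have hA_val : A = (K⁻¹) ^ 2 := by
    rw [hA, hr2]
    field_simp
  have hsA_val : Real.sqrt A = K⁻¹ := by
    rw [hA_val, Real.sqrt_sq (inv_pos.2 hKpos).le]
  rw [hsA_val]
  clear_value K
  have expand : K⁻¹ * Real.sqrt (1 + c) + K⁻¹ / Real.sqrt (-c) * Real.arcsin (Real.sqrt (-c))
      = K⁻¹ * K := by
    rw [hK]; ring
  rw [expand, inv_mul_cancel₀ hKpos.ne', mul_one,
    inv_mul_cancel₀ (by positivity : (2 * Real.pi) ≠ 0)]
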